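/- Let d ≥ 2 and ρ > 0, and let φ_ρ be the ρ-margin loss. Let g : ℝ → ℝ be non-decreasing and continuous with g(1+γ) < G and g(−1−γ) > −G for some G ≥ 0, and assume g(−t) + g(t) ≥ 0 for every t ∈ [0,1]. Then φ_ρ is H_g-calibrated with respect to the adversarial 0/1 loss ℓ_γ if and only if for every t ∈ [0,1]: φ_ρ(G−g(−t)) = φ_ρ(g(t)+G) and min{φ_ρ(Ā(t)), φ_ρ(−A̲(t))} > φ_ρ(G−g(−t)), where Ā(t) = max_{s ∈ [−t,t]} (g(s) − g(s−γ)) and A̲(t) = min_{s ∈ [−t,t]} (g(s) − g(s+γ)). -/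

import Mathlib

open scoped RealInnerProductSpace

noncomputable section

/-- A loss assigns a value to a predictor `f`, a point `x`, and a label `y` (±1). -/
abbrev Loss (d : ℕ) := ((EuclideanSpace ℝ (Fin d)) → ℝ) → (EuclideanSpace ℝ (Fin d)) → ℝ → ℝ

variable {d : ℕ}

/-- The inner (conditional) ℓ-risk. -/
def innerRisk (ℓ : Loss d) (f : EuclideanSpace ℝ (Fin d) → ℝ)
    (x : EuclideanSpace ℝ (Fin d)) (η : ℝ) : ℝ :=
  η * ℓ f x 1 + (1 - η) * ℓ f x (-1)

/-- The minimal inner ℓ-risk over a hypothesis set `H`. -/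
def minInnerRisk (ℓ : Loss d) (H : Set (EuclideanSpace ℝ (Fin d) → ℝ))
    (x : EuclideanSpace ℝ (Fin d)) (η : ℝ) : ℝ :=
  ⨅ f : H, innerRisk ℓ f x η

/-- ℓ₁ is H-calibrated with respect to ℓ₂. -/
def Calibrated (H : Set (EuclideanSpace ℝ (Fin d) → ℝ)) (ℓ₁ ℓ₂ : Loss d) : Prop :=
  ∀ ε > (0:ℝ), ∀ η ∈ Set.Icc (0:ℝ) 1, ∀ x : EuclideanSpace ℝ (Fin d), ‖x‖ ≤ 1 →
    ∃ δ > (0:ℝ), ∀ f ∈ H,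
      innerRisk ℓ₁ f x η < minInnerRisk ℓ₁ H x η + δ →
      innerRisk ℓ₂ f x η < minInnerRisk ℓ₂ H x η + ε

/-- The adversarial 0/1 loss with perturbation radius γ. -/
def advLoss (γ : ℝ) : Loss d := fun f x y =>
  ⨆ x' : Metric.closedBall x γ, (if y * f ↑x' ≤ 0 then (1:ℝ) else 0)

/-- A margin-based loss viewed as a loss. -/
def marginLoss (φ : ℝ → ℝ) : Loss d := fun f x y => φ (y * f x)

/-- The supremum-based surrogate of a margin-based loss. -/
def supLoss (γ : ℝ) (φ : ℝ → ℝ) : Loss d := fun f x y =>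
  ⨆ x' : Metric.closedBall x γ, φ (y * f ↑x')

/-- Infimum of f over the closed γ-ball around x. -/
def infBall (γ : ℝ) (f : EuclideanSpace ℝ (Fin d) → ℝ) (x : EuclideanSpace ℝ (Fin d)) : ℝ :=
  ⨅ x' : Metric.closedBall x γ, f ↑x'

/-- Supremum of f over the closed γ-ball around x. -/
def supBall (γ : ℝ) (f : EuclideanSpace ℝ (Fin d) → ℝ) (x : EuclideanSpace ℝ (Fin d)) : ℝ :=
  ⨆ x' : Metric.closedBall x γ, f ↑x'

/-- x is a distinguishing point for H. -/
def Distinguishing (γ : ℝ) (H : Set (EuclideanSpace ℝ (Fin d) → ℝ))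
    (x : EuclideanSpace ℝ (Fin d)) : Prop :=
  ‖x‖ ≤ 1 ∧ (∃ f ∈ H, 0 < infBall γ f x) ∧ (∃ g ∈ H, supBall γ g x < 0)

/-- H is regular for adversarial calibration. -/
def RegularAdv (γ : ℝ) (H : Set (EuclideanSpace ℝ (Fin d) → ℝ)) : Prop :=
  ∃ x, Distinguishing γ H x

/-- H is symmetric. -/
def SymmetricH (H : Set (EuclideanSpace ℝ (Fin d) → ℝ)) : Prop :=
  ∀ f ∈ H, -f ∈ H

/-- Linear hypothesis set. -/
def Hlin (d : ℕ) : Set (EuclideanSpace ℝ (Fin d) → ℝ) :=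
  { f | ∃ w : EuclideanSpace ℝ (Fin d), ‖w‖ = 1 ∧ f = fun x => (inner ℝ w x : ℝ) }

/-- Generalized linear hypothesis set. -/
def Hg (d : ℕ) (g : ℝ → ℝ) (G : ℝ) : Set (EuclideanSpace ℝ (Fin d) → ℝ) :=
  { f | ∃ (w : EuclideanSpace ℝ (Fin d)) (b : ℝ), ‖w‖ = 1 ∧ |b| ≤ G ∧
      f = fun x => g (inner ℝ w x : ℝ) + b }

/-- ReLU-based hypothesis set. -/
def Hrelu (d : ℕ) (G : ℝ) : Set (EuclideanSpace ℝ (Fin d) → ℝ) :=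
  Hg d (fun t => max t 0) G

/-- One-layer ReLU neural network hypothesis set. -/
def Hnn (d n : ℕ) (Λ W : ℝ) : Set (EuclideanSpace ℝ (Fin d) → ℝ) :=
  { f | ∃ (u : Fin n → ℝ) (w : Fin n → EuclideanSpace ℝ (Fin d)),
      (∑ j, |u j|) ≤ Λ ∧ (∀ j, ‖w j‖ ≤ W) ∧
      f = fun x => ∑ j, u j * max (inner ℝ (w j) x : ℝ) 0 }

/-- All (Borel) measurable functions. -/
def Hall (d : ℕ) : Set (EuclideanSpace ℝ (Fin d) → ℝ) :=
  { f | Measurable f }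

/-- The ρ-margin loss. -/
def phiRho (ρ t : ℝ) : ℝ := min 1 (max 0 (1 - t / ρ))


/-- Ā(t) = max_{s ∈ [−t,t]} (g(s) − g(s−γ)). -/
def Abar (g : ℝ → ℝ) (γ t : ℝ) : ℝ :=
  sSup ((fun s => g s - g (s - γ)) '' Set.Icc (-t) t)

/-- A̲(t) = min_{s ∈ [−t,t]} (g(s) − g(s+γ)). -/
def Alow (g : ℝ → ℝ) (γ t : ℝ) : ℝ :=
  sInf ((fun s => g s - g (s + γ)) '' Set.Icc (-t) t)
section AuxPhi

lemma phi_nonneg (ρ t : ℝ) : 0 ≤ phiRho ρ t := le_min one_pos.le (le_max_left 0 _)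

lemma phi_le_one (ρ t : ℝ) : phiRho ρ t ≤ 1 := min_le_left _ _

lemma phi_of_nonpos {ρ : ℝ} (hρ : 0 < ρ) {t : ℝ} (h : t ≤ 0) : phiRho ρ t = 1 := by
  have h0 : t / ρ ≤ 0 := div_nonpos_of_nonpos_of_nonneg h hρ.le
  unfold phiRho
  rw [max_eq_right (by linarith), min_eq_left (by linarith)]

lemma phi_anti {ρ : ℝ} (hρ : 0 < ρ) : Antitone (phiRho ρ) := by
  intro a b hab
  have : a / ρ ≤ b / ρ := by gcongr
  exact min_le_min le_rfl (max_le_max le_rfl (by linarith))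

lemma phi_lt_one {ρ t : ℝ} (hρ : 0 < ρ) (h : 0 < t) : phiRho ρ t < 1 := by
  have h0 : 0 < t / ρ := div_pos h hρ
  exact lt_of_le_of_lt (min_le_right _ _) (max_lt one_pos (by linarith))

lemma phi_eq {ρ t : ℝ} (hρ : 0 < ρ) (h0 : 0 ≤ t) (h1 : t ≤ ρ) : phiRho ρ t = 1 - t / ρ := by
  have ha : 0 ≤ t / ρ := div_nonneg h0 hρ.le
  have hb : t / ρ ≤ 1 := (div_le_one hρ).2 h1
  unfold phiRho
  rw [max_eq_right (by linarith), min_eq_right (by linarith)]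

lemma phi_of_ge {ρ t : ℝ} (hρ : 0 < ρ) (h : ρ ≤ t) : phiRho ρ t = 0 := by
  have hb : 1 ≤ t / ρ := (one_le_div hρ).2 h
  unfold phiRho
  rw [max_eq_left (by linarith), min_eq_right (by linarith)]

lemma phi_pos {ρ t : ℝ} (hρ : 0 < ρ) (h : t < ρ) : 0 < phiRho ρ t := by
  have hb : t / ρ < 1 := (div_lt_one hρ).2 h
  exact lt_min one_pos (lt_of_lt_of_le (by linarith) (le_max_right 0 _))

lemma phi_lt_rho {ρ t : ℝ} (hρ : 0 < ρ) (h : 0 < phiRho ρ t) : t < ρ := by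
  by_contra hc
  rw [phi_of_ge hρ (not_lt.1 hc)] at h
  exact lt_irrefl 0 h

lemma phi_sub {ρ p q : ℝ} (hρ : 0 < ρ) (hp : 0 ≤ p) (hpq : p ≤ q) (hq : q ≤ ρ) :
    phiRho ρ p - phiRho ρ q = (q - p) / ρ := by
  rw [phi_eq hρ hp (hpq.trans hq), phi_eq hρ (hp.trans hpq) hq]
  ring

lemma phi_min {ρ R : ℝ} (hρ : 0 < ρ) : phiRho ρ R = phiRho ρ (min ρ R) := by
  rcases le_total R ρ with h | h
  · rw [min_eq_right h]
  · rw [min_eq_left h, phi_of_ge hρ h, phi_of_ge hρ le_rfl]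

lemma phi_lt_of_lt {ρ p q : ℝ} (hρ : 0 < ρ) (hq : phiRho ρ q < phiRho ρ p) :
    q > p := by
  by_contra hc
  exact absurd (phi_anti hρ (not_lt.1 hc)) (not_le.2 hq)

end AuxPhi
section AuxSup

lemma iSup_ite_one {ι : Sort*} [Nonempty ι] (p : ι → Prop) [DecidablePred p] (h : ∃ i, p i) :
    (⨆ i, (if p i then (1:ℝ) else 0)) = 1 := by
  obtain ⟨i, hi⟩ := h
  apply le_antisymm
  · exact ciSup_le fun j => by by_cases hj : p j <;> simp [hj]
  · have hb : BddAbove (Set.range fun i => (if p i then (1:ℝ) else 0)) := by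
      refine ⟨1, ?_⟩
      rintro _ ⟨j, rfl⟩
      by_cases hj : p j <;> simp [hj]
    have := le_ciSup hb i
    simpa [hi] using this

lemma iSup_ite_zero {ι : Sort*} [Nonempty ι] (p : ι → Prop) [DecidablePred p] (h : ∀ i, ¬ p i) :
    (⨆ i, (if p i then (1:ℝ) else 0)) = 0 := by
  have he : (fun i => (if p i then (1:ℝ) else 0)) = fun _ => 0 := funext fun i => if_neg (h i)
  rw [he, ciSup_const]

lemma iSup_ite_mem {ι : Sort*} [Nonempty ι] (p : ι → Prop) [DecidablePred p] :
    (⨆ i, (if p i then (1:ℝ) else 0)) = 0 ∨ (⨆ i, (if p i then (1:ℝ) else 0)) = 1 := by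
  by_cases h : ∃ i, p i
  · exact Or.inr (iSup_ite_one p h)
  · exact Or.inl (iSup_ite_zero p (not_exists.1 h))

lemma iSup_ite_nonneg {ι : Sort*} [Nonempty ι] (p : ι → Prop) [DecidablePred p] :
    0 ≤ (⨆ i, (if p i then (1:ℝ) else 0)) :=
  Real.iSup_nonneg fun i => by by_cases hi : p i <;> simp [hi]

end AuxSup

section AuxAdv

variable {d : ℕ}

lemma ball_nonempty {γ : ℝ} (hγ0 : 0 < γ) (x : EuclideanSpace ℝ (Fin d)) :
    Nonempty ↥(Metric.closedBall x γ) :=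
  ⟨⟨x, Metric.mem_closedBall_self hγ0.le⟩⟩

/-- inner over ball lower bound -/
lemma inner_ball_ge {γ : ℝ} (w x : EuclideanSpace ℝ (Fin d)) (hw : ‖w‖ = 1)
    (x' : EuclideanSpace ℝ (Fin d)) (hx' : x' ∈ Metric.closedBall x γ) :
    ⟪w, x⟫ - γ ≤ ⟪w, x'⟫ := by
  have h1 : ⟪w, x⟫ - ⟪w, x'⟫ = ⟪w, x - x'⟫ := by rw [inner_sub_right]
  have h2 : ⟪w, x - x'⟫ ≤ ‖w‖ * ‖x - x'‖ := real_inner_le_norm w (x - x')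
  have h3 : ‖x - x'‖ ≤ γ := by
    rw [← dist_eq_norm]
    rw [Metric.mem_closedBall, dist_comm] at hx'
    exact hx'
  rw [hw, one_mul] at h2
  linarith

lemma inner_ball_le {γ : ℝ} (w x : EuclideanSpace ℝ (Fin d)) (hw : ‖w‖ = 1)
    (x' : EuclideanSpace ℝ (Fin d)) (hx' : x' ∈ Metric.closedBall x γ) :
    ⟪w, x'⟫ ≤ ⟪w, x⟫ + γ := by
  have h1 : ⟪w, x'⟫ - ⟪w, x⟫ = ⟪w, x' - x⟫ := by rw [inner_sub_right]
  have h2 : ⟪w, x' - x⟫ ≤ ‖w‖ * ‖x' - x‖ := real_inner_le_norm w (x' - x)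
  have h3 : ‖x' - x‖ ≤ γ := by
    rw [← dist_eq_norm]
    exact hx'
  rw [hw, one_mul] at h2
  linarith

lemma mem_ball_sub {γ : ℝ} (hγ0 : 0 < γ) (w x : EuclideanSpace ℝ (Fin d)) (hw : ‖w‖ = 1) :
    x - γ • w ∈ Metric.closedBall x γ := by
  rw [Metric.mem_closedBall, dist_eq_norm]
  have : x - γ • w - x = -(γ • w) := by abel
  rw [this, norm_neg, norm_smul, hw]
  simp [abs_of_pos hγ0]

lemma mem_ball_add {γ : ℝ} (hγ0 : 0 < γ) (w x : EuclideanSpace ℝ (Fin d)) (hw : ‖w‖ = 1) :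
    x + γ • w ∈ Metric.closedBall x γ := by
  rw [Metric.mem_closedBall, dist_eq_norm]
  have : x + γ • w - x = γ • w := by abel
  rw [this, norm_smul, hw]
  simp [abs_of_pos hγ0]

lemma inner_sub_smul (w x : EuclideanSpace ℝ (Fin d)) (hw : ‖w‖ = 1) (γ : ℝ) :
    ⟪w, x - γ • w⟫ = ⟪w, x⟫ - γ := by
  rw [inner_sub_right, real_inner_smul_right, real_inner_self_eq_norm_sq, hw]
  ring

lemma inner_add_smul (w x : EuclideanSpace ℝ (Fin d)) (hw : ‖w‖ = 1) (γ : ℝ) :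
    ⟪w, x + γ • w⟫ = ⟪w, x⟫ + γ := by
  rw [inner_add_right, real_inner_smul_right, real_inner_self_eq_norm_sq, hw]
  ring

/-- value of the adversarial loss at y = 1 for a generalized linear predictor -/
lemma adv_pos {γ : ℝ} (hγ0 : 0 < γ) (g : ℝ → ℝ) (hg : Monotone g)
    (w : EuclideanSpace ℝ (Fin d)) (hw : ‖w‖ = 1) (b : ℝ) (x : EuclideanSpace ℝ (Fin d)) :
    advLoss γ (fun z => g ⟪w, z⟫ + b) x 1
      = if g (⟪w, x⟫ - γ) + b ≤ 0 then 1 else 0 := by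
  haveI := ball_nonempty hγ0 x
  unfold advLoss
  by_cases h : g (⟪w, x⟫ - γ) + b ≤ 0
  · rw [if_pos h]
    apply iSup_ite_one
    refine ⟨⟨x - γ • w, mem_ball_sub hγ0 w x hw⟩, ?_⟩
    show 1 * (g ⟪w, x - γ • w⟫ + b) ≤ 0
    rw [one_mul, inner_sub_smul w x hw γ]
    exact h
  · rw [if_neg h]
    apply iSup_ite_zero
    rintro ⟨x', hx'⟩
    show ¬ 1 * (g ⟪w, x'⟫ + b) ≤ 0
    rw [one_mul]
    intro hle
    apply h
    have := hg (inner_ball_ge w x hw x' hx')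
    linarith

/-- value of the adversarial loss at y = -1 for a generalized linear predictor -/
lemma adv_neg {γ : ℝ} (hγ0 : 0 < γ) (g : ℝ → ℝ) (hg : Monotone g)
    (w : EuclideanSpace ℝ (Fin d)) (hw : ‖w‖ = 1) (b : ℝ) (x : EuclideanSpace ℝ (Fin d)) :
    advLoss γ (fun z => g ⟪w, z⟫ + b) x (-1)
      = if 0 ≤ g (⟪w, x⟫ + γ) + b then 1 else 0 := by
  haveI := ball_nonempty hγ0 x
  unfold advLoss
  by_cases h : 0 ≤ g (⟪w, x⟫ + γ) + b
  · rw [if_pos h]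
    apply iSup_ite_one
    refine ⟨⟨x + γ • w, mem_ball_add hγ0 w x hw⟩, ?_⟩
    show (-1) * (g ⟪w, x + γ • w⟫ + b) ≤ 0
    rw [neg_one_mul, inner_add_smul w x hw γ]
    linarith
  · rw [if_neg h]
    apply iSup_ite_zero
    rintro ⟨x', hx'⟩
    show ¬ (-1) * (g ⟪w, x'⟫ + b) ≤ 0
    rw [neg_one_mul]
    intro hle
    apply h
    have h2 : (0:ℝ) ≤ g ⟪w, x'⟫ + b := by linarith
    have := hg (inner_ball_le w x hw x' hx')
    linarith

end AuxAdv
section AuxRisk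

variable {d : ℕ}

lemma margin_risk (φ : ℝ → ℝ) (f : EuclideanSpace ℝ (Fin d) → ℝ)
    (x : EuclideanSpace ℝ (Fin d)) (η : ℝ) :
    innerRisk (marginLoss φ) f x η = η * φ (f x) + (1 - η) * φ (-(f x)) := by
  unfold innerRisk marginLoss
  rw [one_mul, neg_one_mul]

lemma adv_risk {γ : ℝ} (hγ0 : 0 < γ) (g : ℝ → ℝ) (hg : Monotone g)
    (w : EuclideanSpace ℝ (Fin d)) (hw : ‖w‖ = 1) (b : ℝ)
    (x : EuclideanSpace ℝ (Fin d)) (η : ℝ) :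
    innerRisk (advLoss γ) (fun z => g ⟪w, z⟫ + b) x η
      = η * (if g (⟪w, x⟫ - γ) + b ≤ 0 then 1 else 0)
        + (1 - η) * (if 0 ≤ g (⟪w, x⟫ + γ) + b then 1 else 0) := by
  unfold innerRisk
  rw [adv_pos hγ0 g hg w hw b x, adv_neg hγ0 g hg w hw b x]

lemma margin_risk_nonneg (ρ : ℝ) (f : EuclideanSpace ℝ (Fin d) → ℝ)
    (x : EuclideanSpace ℝ (Fin d)) {η : ℝ} (hη : η ∈ Set.Icc (0:ℝ) 1) :
    0 ≤ innerRisk (marginLoss (phiRho ρ)) f x η := by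
  rw [margin_risk]
  have h1 := phi_nonneg ρ (f x)
  have h2 := phi_nonneg ρ (-(f x))
  obtain ⟨h3, h4⟩ := hη
  have := mul_nonneg h3 h1
  have := mul_nonneg (by linarith : (0:ℝ) ≤ 1 - η) h2
  linarith

lemma adv_risk_nonneg {γ : ℝ} (hγ0 : 0 < γ) (f : EuclideanSpace ℝ (Fin d) → ℝ)
    (x : EuclideanSpace ℝ (Fin d)) {η : ℝ} (hη : η ∈ Set.Icc (0:ℝ) 1) :
    0 ≤ innerRisk (advLoss γ) f x η := by
  haveI := ball_nonempty hγ0 x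
  unfold innerRisk advLoss
  have h1 : 0 ≤ (⨆ x' : Metric.closedBall x γ, (if 1 * f ↑x' ≤ 0 then (1:ℝ) else 0)) :=
    iSup_ite_nonneg _
  have h2 : 0 ≤ (⨆ x' : Metric.closedBall x γ, (if (-1) * f ↑x' ≤ 0 then (1:ℝ) else 0)) :=
    iSup_ite_nonneg _
  obtain ⟨h3, h4⟩ := hη
  have := mul_nonneg h3 h1
  have := mul_nonneg (by linarith : (0:ℝ) ≤ 1 - η) h2
  linarith

lemma minInner_le {ℓ : Loss d} {H : Set (EuclideanSpace ℝ (Fin d) → ℝ)}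
    {x : EuclideanSpace ℝ (Fin d)} {η : ℝ}
    (hnn : ∀ f ∈ H, 0 ≤ innerRisk ℓ f x η) {f : EuclideanSpace ℝ (Fin d) → ℝ} (hf : f ∈ H) :
    minInnerRisk ℓ H x η ≤ innerRisk ℓ f x η := by
  unfold minInnerRisk
  refine ciInf_le ⟨0, ?_⟩ (⟨f, hf⟩ : H)
  rintro _ ⟨f', rfl⟩
  exact hnn f' f'.2

lemma le_minInner {ℓ : Loss d} {H : Set (EuclideanSpace ℝ (Fin d) → ℝ)}
    {x : EuclideanSpace ℝ (Fin d)} {η : ℝ} (hne : H.Nonempty) {m : ℝ}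
    (h : ∀ f ∈ H, m ≤ innerRisk ℓ f x η) : m ≤ minInnerRisk ℓ H x η := by
  haveI : Nonempty ↥H := hne.to_subtype
  exact le_ciInf fun f => h f f.2

lemma mem_Hg {g : ℝ → ℝ} {G : ℝ} {w : EuclideanSpace ℝ (Fin d)} {b : ℝ}
    (hw : ‖w‖ = 1) (hb : |b| ≤ G) : (fun z => g ⟪w, z⟫ + b) ∈ Hg d g G :=
  ⟨w, b, hw, hb, rfl⟩

end AuxRisk

section AuxGeom

variable {d : ℕ}

lemma exists_unit (hd : 2 ≤ d) : ∃ w : EuclideanSpace ℝ (Fin d), ‖w‖ = 1 := by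
  refine ⟨EuclideanSpace.single (⟨0, by omega⟩ : Fin d) (1:ℝ), ?_⟩
  rw [EuclideanSpace.norm_single]
  norm_num

lemma exists_unit_inner_norm (hd : 2 ≤ d) (x : EuclideanSpace ℝ (Fin d)) :
    ∃ w : EuclideanSpace ℝ (Fin d), ‖w‖ = 1 ∧ ⟪w, x⟫ = ‖x‖ := by
  by_cases hx : x = 0
  · obtain ⟨w, hw⟩ := exists_unit hd
    exact ⟨w, hw, by simp [hx]⟩
  · have hn : (0:ℝ) < ‖x‖ := norm_pos_iff.2 hx
    refine ⟨‖x‖⁻¹ • x, ?_, ?_⟩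
    · rw [norm_smul, norm_inv, norm_norm, inv_mul_cancel₀ hn.ne']
    · rw [real_inner_smul_left, real_inner_self_eq_norm_sq]
      field_simp

lemma exists_unit_inner_neg_norm (hd : 2 ≤ d) (x : EuclideanSpace ℝ (Fin d)) :
    ∃ w : EuclideanSpace ℝ (Fin d), ‖w‖ = 1 ∧ ⟪w, x⟫ = -‖x‖ := by
  obtain ⟨w, hw, hwx⟩ := exists_unit_inner_norm hd x
  refine ⟨-w, by rw [norm_neg, hw], ?_⟩
  rw [inner_neg_left, hwx]

/-- unit vector with prescribed inner product against t • e_{i0}, |s| ≤ t -/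
lemma exists_unit_inner' {i0 i1 : Fin d} (hne : i1 ≠ i0) {t s : ℝ} (ht : 0 ≤ t) (hs : |s| ≤ t) :
    ∃ w : EuclideanSpace ℝ (Fin d),
      ‖w‖ = 1 ∧ ⟪w, t • EuclideanSpace.single i0 (1:ℝ)⟫ = s := by
  rcases eq_or_lt_of_le ht with rfl | htpos
  · have hs0 : s = 0 := by
      have := abs_nonpos_iff.1 hs
      exact this
    refine ⟨EuclideanSpace.single i0 (1:ℝ), ?_, ?_⟩
    · rw [EuclideanSpace.norm_single]; norm_num
    · rw [hs0, zero_smul, inner_zero_right]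
  · set α : ℝ := s / t with hα
    have hα2 : α ^ 2 ≤ 1 := by
      rw [hα, div_pow, div_le_one (by positivity)]
      have h1 := mul_le_mul hs hs (abs_nonneg s) ht
      have h2 := sq_abs s
      nlinarith
    set β : ℝ := Real.sqrt (1 - α ^ 2) with hβ
    have hβ2 : β ^ 2 = 1 - α ^ 2 := Real.sq_sqrt (by linarith)
    set w : EuclideanSpace ℝ (Fin d) :=
      EuclideanSpace.single i0 α + EuclideanSpace.single i1 β with hw
    have happ0 : w i0 = α := by
      rw [hw]
      show EuclideanSpace.single i0 α i0 + EuclideanSpace.single i1 β i0 = α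
      rw [EuclideanSpace.single_apply, EuclideanSpace.single_apply]
      simp [hne, Ne.symm hne]
    have happ1 : w i1 = β := by
      rw [hw]
      show EuclideanSpace.single i0 α i1 + EuclideanSpace.single i1 β i1 = β
      rw [EuclideanSpace.single_apply, EuclideanSpace.single_apply]
      simp [hne, Ne.symm hne]
    have hinner : ∀ v : EuclideanSpace ℝ (Fin d), ⟪w, v⟫ = α * v i0 + β * v i1 := by
      intro v
      rw [hw, inner_add_left, EuclideanSpace.inner_single_left, EuclideanSpace.inner_single_left]
      simp
    have hnorm : ‖w‖ = 1 := by
      have h1 : ⟪w, w⟫ = α * w i0 + β * w i1 := hinner w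
      rw [happ0, happ1] at h1
      rw [real_inner_self_eq_norm_sq] at h1
      have h2 : (‖w‖ - 1) * (‖w‖ + 1) = 0 := by nlinarith
      rcases mul_eq_zero.1 h2 with h3 | h3
      · linarith
      · have := norm_nonneg w
        linarith
    refine ⟨w, hnorm, ?_⟩
    rw [hinner]
    have e0 : (t • EuclideanSpace.single i0 (1:ℝ) : EuclideanSpace ℝ (Fin d)) i0 = t := by
      rw [PiLp.smul_apply, EuclideanSpace.single_apply]
      simp
    have e1 : (t • EuclideanSpace.single i0 (1:ℝ) : EuclideanSpace ℝ (Fin d)) i1 = 0 := by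
      rw [PiLp.smul_apply, EuclideanSpace.single_apply]
      simp [hne]
    rw [e0, e1, hα]
    field_simp
    ring

end AuxGeom
section AuxAbar

lemma abar_spec {g : ℝ → ℝ} (hgcont : Continuous g) (γ : ℝ) {t : ℝ} (ht : 0 ≤ t) :
    (∀ s ∈ Set.Icc (-t) t, g s - g (s - γ) ≤ Abar g γ t) ∧
      ∃ s ∈ Set.Icc (-t) t, Abar g γ t = g s - g (s - γ) := by
  have hc : Continuous fun s => g s - g (s - γ) :=
    hgcont.sub (hgcont.comp (continuous_id.sub continuous_const))
  have hne : (Set.Icc (-t) t).Nonempty := Set.nonempty_Icc.2 (by linarith)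
  obtain ⟨s0, hs0, hmax⟩ := isCompact_Icc.exists_isMaxOn hne hc.continuousOn
  have hgr : IsGreatest ((fun s => g s - g (s - γ)) '' Set.Icc (-t) t) (g s0 - g (s0 - γ)) := by
    constructor
    · exact ⟨s0, hs0, rfl⟩
    · rintro _ ⟨y, hy, rfl⟩
      exact hmax hy
  have habar : Abar g γ t = g s0 - g (s0 - γ) := hgr.csSup_eq
  constructor
  · intro s hs
    rw [habar]
    exact hmax hs
  · exact ⟨s0, hs0, habar⟩

lemma alow_spec {g : ℝ → ℝ} (hgcont : Continuous g) (γ : ℝ) {t : ℝ} (ht : 0 ≤ t) :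
    (∀ s ∈ Set.Icc (-t) t, Alow g γ t ≤ g s - g (s + γ)) ∧
      ∃ s ∈ Set.Icc (-t) t, Alow g γ t = g s - g (s + γ) := by
  have hc : Continuous fun s => g s - g (s + γ) :=
    hgcont.sub (hgcont.comp (continuous_id.add continuous_const))
  have hne : (Set.Icc (-t) t).Nonempty := Set.nonempty_Icc.2 (by linarith)
  obtain ⟨s0, hs0, hmin⟩ := isCompact_Icc.exists_isMinOn hne hc.continuousOn
  have hgr : IsLeast ((fun s => g s - g (s + γ)) '' Set.Icc (-t) t) (g s0 - g (s0 + γ)) := by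
    constructor
    · exact ⟨s0, hs0, rfl⟩
    · rintro _ ⟨y, hy, rfl⟩
      exact hmin hy
  have halow : Alow g γ t = g s0 - g (s0 + γ) := hgr.csInf_eq
  constructor
  · intro s hs
    rw [halow]
    exact hmin hs
  · exact ⟨s0, hs0, halow⟩

lemma abar_nonneg {g : ℝ → ℝ} (hgmono : Monotone g) (hgcont : Continuous g) {γ : ℝ}
    (hγ0 : 0 ≤ γ) {t : ℝ} (ht : 0 ≤ t) : 0 ≤ Abar g γ t := by
  have h := (abar_spec hgcont γ ht).1 0 (by constructor <;> linarith)
  have h2 : g (0 - γ) ≤ g 0 := hgmono (by linarith)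
  linarith

lemma alow_nonpos {g : ℝ → ℝ} (hgmono : Monotone g) (hgcont : Continuous g) {γ : ℝ}
    (hγ0 : 0 ≤ γ) {t : ℝ} (ht : 0 ≤ t) : Alow g γ t ≤ 0 := by
  have h := (alow_spec hgcont γ ht).1 0 (by constructor <;> linarith)
  have h2 : g 0 ≤ g (0 + γ) := hgmono (by linarith)
  linarith

end AuxAbar

section AuxMin

variable {d : ℕ}

lemma inner_abs_le {w x : EuclideanSpace ℝ (Fin d)} (hw : ‖w‖ = 1) :
    |⟪w, x⟫| ≤ ‖x‖ := by
  have := abs_real_inner_le_norm w x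
  rw [hw, one_mul] at this
  exact this

lemma Hg_nonempty (hd : 2 ≤ d) (g : ℝ → ℝ) {G : ℝ} (hG : 0 ≤ G) : (Hg d g G).Nonempty := by
  obtain ⟨w, hw⟩ := exists_unit hd
  exact ⟨fun z => g ⟪w, z⟫ + 0, mem_Hg hw (by simpa using hG)⟩

/-- the adversarial minimal risk is at least min η (1-η) -/
lemma minAdv_ge (hd : 2 ≤ d) {γ : ℝ} (hγ0 : 0 < γ) {g : ℝ → ℝ} (hgmono : Monotone g)
    {G : ℝ} (hG : 0 ≤ G) (x : EuclideanSpace ℝ (Fin d)) {η : ℝ} (hη : η ∈ Set.Icc (0:ℝ) 1) :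
    min η (1 - η) ≤ minInnerRisk (advLoss γ) (Hg d g G) x η := by
  apply le_minInner (Hg_nonempty hd g hG)
  rintro f ⟨w, b, hw, hb, rfl⟩
  rw [adv_risk hγ0 g hgmono w hw b x]
  obtain ⟨hη0, hη1⟩ := hη
  by_cases h1 : g (⟪w, x⟫ - γ) + b ≤ 0
  · rw [if_pos h1]
    by_cases h2 : 0 ≤ g (⟪w, x⟫ + γ) + b
    · rw [if_pos h2]
      have := min_le_left η (1 - η)
      have := min_le_right η (1 - η)
      linarith
    · rw [if_neg h2]
      have := min_le_left η (1 - η)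
      linarith
  · rw [if_neg h1]
    have h2 : 0 ≤ g (⟪w, x⟫ + γ) + b := by
      have : g (⟪w, x⟫ - γ) ≤ g (⟪w, x⟫ + γ) := hgmono (by linarith)
      linarith
    rw [if_pos h2]
    have := min_le_right η (1 - η)
    linarith

/-- upper bound η for minimal adversarial risk, using b = -G -/
lemma minAdv_le_eta (hd : 2 ≤ d) {γ : ℝ} (hγ0 : 0 < γ) {g : ℝ → ℝ} (hgmono : Monotone g)
    {G : ℝ} (hG : 0 ≤ G) (hg1 : g (1 + γ) < G)
    {x : EuclideanSpace ℝ (Fin d)} (hx : ‖x‖ ≤ 1) {η : ℝ} (hη : η ∈ Set.Icc (0:ℝ) 1) :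
    minInnerRisk (advLoss γ) (Hg d g G) x η ≤ η := by
  obtain ⟨w, hw⟩ := exists_unit hd
  have hsb : |⟪w, x⟫| ≤ 1 := le_trans (inner_abs_le hw) hx
  rw [abs_le] at hsb
  have key : innerRisk (advLoss γ) (fun z => g ⟪w, z⟫ + (-G)) x η = η := by
    rw [adv_risk hγ0 g hgmono w hw (-G) x]
    have h1 : g (⟪w, x⟫ - γ) + (-G) ≤ 0 := by
      have : g (⟪w, x⟫ - γ) ≤ g (1 + γ) := hgmono (by linarith)
      linarith
    have h2 : ¬ (0 ≤ g (⟪w, x⟫ + γ) + (-G)) := by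
      have : g (⟪w, x⟫ + γ) ≤ g (1 + γ) := hgmono (by linarith)
      push_neg
      linarith
    rw [if_pos h1, if_neg h2]
    ring
  calc minInnerRisk (advLoss γ) (Hg d g G) x η
      ≤ innerRisk (advLoss γ) (fun z => g ⟪w, z⟫ + (-G)) x η := by
        apply minInner_le (fun f _ => adv_risk_nonneg hγ0 f x hη)
        exact mem_Hg hw (by rw [abs_neg, abs_of_nonneg hG])
    _ = η := key

/-- upper bound 1 - η for minimal adversarial risk, using b = G -/
lemma minAdv_le_one_sub (hd : 2 ≤ d) {γ : ℝ} (hγ0 : 0 < γ) {g : ℝ → ℝ} (hgmono : Monotone g)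
    {G : ℝ} (hG : 0 ≤ G) (hg2 : -G < g (-1 - γ))
    {x : EuclideanSpace ℝ (Fin d)} (hx : ‖x‖ ≤ 1) {η : ℝ} (hη : η ∈ Set.Icc (0:ℝ) 1) :
    minInnerRisk (advLoss γ) (Hg d g G) x η ≤ 1 - η := by
  obtain ⟨w, hw⟩ := exists_unit hd
  have hsb : |⟪w, x⟫| ≤ 1 := le_trans (inner_abs_le hw) hx
  rw [abs_le] at hsb
  have key : innerRisk (advLoss γ) (fun z => g ⟪w, z⟫ + G) x η = 1 - η := by
    rw [adv_risk hγ0 g hgmono w hw G x]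
    have h1 : ¬ (g (⟪w, x⟫ - γ) + G ≤ 0) := by
      have : g (-1 - γ) ≤ g (⟪w, x⟫ - γ) := hgmono (by linarith)
      push_neg
      linarith
    have h2 : 0 ≤ g (⟪w, x⟫ + γ) + G := by
      have : g (-1 - γ) ≤ g (⟪w, x⟫ + γ) := hgmono (by linarith)
      linarith
    rw [if_neg h1, if_pos h2]
    ring
  calc minInnerRisk (advLoss γ) (Hg d g G) x η
      ≤ innerRisk (advLoss γ) (fun z => g ⟪w, z⟫ + G) x η := by
        apply minInner_le (fun f _ => adv_risk_nonneg hγ0 f x hη)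
        exact mem_Hg hw (by rw [abs_of_nonneg hG])
    _ = 1 - η := key

lemma margin_risk_param (φ : ℝ → ℝ) (g : ℝ → ℝ) (w : EuclideanSpace ℝ (Fin d)) (b : ℝ)
    (x : EuclideanSpace ℝ (Fin d)) (η : ℝ) :
    innerRisk (marginLoss φ) (fun z => g ⟪w, z⟫ + b) x η
      = η * φ (g ⟪w, x⟫ + b) + (1 - η) * φ (-(g ⟪w, x⟫ + b)) := by
  have h := margin_risk (d := d) φ (fun z => g ⟪w, z⟫ + b) x η
  simpa using h

/-- upper bound for minimal margin risk via u = R -/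
lemma minMargin_le_R (hd : 2 ≤ d) (ρ : ℝ) {g : ℝ → ℝ} {G : ℝ} (hG : 0 ≤ G)
    (x : EuclideanSpace ℝ (Fin d)) {η : ℝ} (hη : η ∈ Set.Icc (0:ℝ) 1) :
    minInnerRisk (marginLoss (phiRho ρ)) (Hg d g G) x η ≤
      η * phiRho ρ (g ‖x‖ + G) + (1 - η) * phiRho ρ (-(g ‖x‖ + G)) := by
  obtain ⟨w, hw, hwx⟩ := exists_unit_inner_norm hd x
  have : innerRisk (marginLoss (phiRho ρ)) (fun z => g ⟪w, z⟫ + G) x η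
      = η * phiRho ρ (g ‖x‖ + G) + (1 - η) * phiRho ρ (-(g ‖x‖ + G)) := by
    rw [margin_risk]
    simp only [hwx]
  rw [← this]
  apply minInner_le (fun f _ => margin_risk_nonneg ρ f x hη)
  exact mem_Hg hw (by rw [abs_of_nonneg hG])

/-- upper bound for minimal margin risk via u = L -/
lemma minMargin_le_L (hd : 2 ≤ d) (ρ : ℝ) {g : ℝ → ℝ} {G : ℝ} (hG : 0 ≤ G)
    (x : EuclideanSpace ℝ (Fin d)) {η : ℝ} (hη : η ∈ Set.Icc (0:ℝ) 1) :
    minInnerRisk (marginLoss (phiRho ρ)) (Hg d g G) x η ≤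
      η * phiRho ρ (g (-‖x‖) - G) + (1 - η) * phiRho ρ (-(g (-‖x‖) - G)) := by
  obtain ⟨w, hw, hwx⟩ := exists_unit_inner_neg_norm hd x
  have : innerRisk (marginLoss (phiRho ρ)) (fun z => g ⟪w, z⟫ + (-G)) x η
      = η * phiRho ρ (g (-‖x‖) - G) + (1 - η) * phiRho ρ (-(g (-‖x‖) - G)) := by
    rw [margin_risk]
    simp only [hwx]
    ring_nf
  rw [← this]
  apply minInner_le (fun f _ => margin_risk_nonneg ρ f x hη)
  exact mem_Hg hw (by rw [abs_neg, abs_of_nonneg hG])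

end AuxMin
section MainNec
set_option maxHeartbeats 1000000

variable {d : ℕ}

lemma necessity (hd : 2 ≤ d) {γ : ℝ} (hγ0 : 0 < γ) (hγ1 : γ < 1)
    {ρ : ℝ} (hρ : 0 < ρ) {g : ℝ → ℝ} (hgmono : Monotone g) (hgcont : Continuous g)
    {G : ℝ} (hG : 0 ≤ G) (hg1 : g (1 + γ) < G) (hg2 : -G < g (-1 - γ))
    (hgsum : ∀ t ∈ Set.Icc (0:ℝ) 1, 0 ≤ g (-t) + g t)
    (hcal : Calibrated (Hg d g G) (marginLoss (phiRho ρ)) (advLoss γ))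
    {t : ℝ} (ht : t ∈ Set.Icc (0:ℝ) 1) :
    phiRho ρ (G - g (-t)) = phiRho ρ (g t + G) ∧
    phiRho ρ (G - g (-t)) < min (phiRho ρ (Abar g γ t)) (phiRho ρ (-(Alow g γ t))) := by
  obtain ⟨ht0, ht1⟩ := ht
  have hd1 : 0 < d := by omega
  set i0 : Fin d := ⟨0, by omega⟩ with hi0
  set i1 : Fin d := ⟨1, by omega⟩ with hi1
  have hne : i1 ≠ i0 := by simp [hi0, hi1, Fin.ext_iff]
  set E : EuclideanSpace ℝ (Fin d) := EuclideanSpace.single i0 (1:ℝ) with hE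
  set x : EuclideanSpace ℝ (Fin d) := t • E with hxdef
  have hEnorm : ‖E‖ = 1 := by rw [hE, EuclideanSpace.norm_single]; norm_num
  have hxnorm : ‖x‖ = t := by
    rw [hxdef, norm_smul, hEnorm, Real.norm_eq_abs, abs_of_nonneg ht0, mul_one]
  have hx1 : ‖x‖ ≤ 1 := by rw [hxnorm]; exact ht1
  have hEx : ⟪E, x⟫ = t := by
    rw [hxdef, real_inner_smul_right, real_inner_self_eq_norm_sq, hEnorm]
    norm_num
  have hgt_lt : ∀ s : ℝ, s ≤ 1 + γ → g s < G := fun s hs => lt_of_le_of_lt (hgmono hs) hg1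
  have hgt_gt : ∀ s : ℝ, -1 - γ ≤ s → -G < g s := fun s hs => lt_of_lt_of_le hg2 (hgmono hs)
  have hRpos : 0 < g t + G := by have := hgt_gt t (by linarith); linarith
  have hLpos : 0 < G - g (-t) := by have := hgt_lt (-t) (by linarith); linarith
  have hLR : G - g (-t) ≤ g t + G := by have := hgsum t ⟨ht0, ht1⟩; linarith
  -- bounds on u = g s + b for any member of Hg
  have hu_bounds : ∀ (w : EuclideanSpace ℝ (Fin d)) (b : ℝ), ‖w‖ = 1 → |b| ≤ G →
      g (-t) - G ≤ g ⟪w, x⟫ + b ∧ g ⟪w, x⟫ + b ≤ g t + G := by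
    intro w b hw hb
    have hs : |⟪w, x⟫| ≤ t := by rw [← hxnorm]; exact inner_abs_le hw
    rw [abs_le] at hs hb
    constructor
    · have := hgmono hs.1
      linarith
    · have := hgmono hs.2
      linarith
  -- Part (i)
  have hi : phiRho ρ (G - g (-t)) = phiRho ρ (g t + G) := by
    by_contra hneq
    have hgtphi : phiRho ρ (g t + G) < phiRho ρ (G - g (-t)) :=
      lt_of_le_of_ne (phi_anti hρ hLR) fun h => hneq h.symm
    set φR := phiRho ρ (g t + G) with hφR
    set φL := phiRho ρ (G - g (-t)) with hφL
    obtain ⟨τ, hτpos, hτ8, hτ4⟩ : ∃ τ : ℝ, 0 < τ ∧ τ ≤ (φL - φR) / 8 ∧ τ ≤ 1 / 4 :=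
      ⟨min ((φL - φR) / 8) (1 / 4), lt_min (by linarith) (by norm_num),
        min_le_left _ _, min_le_right _ _⟩
    obtain ⟨η, hηdef⟩ : ∃ η : ℝ, η = 1 / 2 - τ := ⟨_, rfl⟩
    have hη01 : η ∈ Set.Icc (0:ℝ) 1 := ⟨by rw [hηdef]; linarith, by rw [hηdef]; linarith⟩
    obtain ⟨δ, hδpos, hcalδ⟩ := hcal τ hτpos η hη01 x hx1
    -- lower bound for the minimal margin risk
    have hmlow : η * φR + (1 - η) * phiRho ρ (-(g t + G)) ≤
        minInnerRisk (marginLoss (phiRho ρ)) (Hg d g G) x η := by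
      apply le_minInner (Hg_nonempty hd g hG)
      rintro f ⟨w, b, hw, hb, rfl⟩
      rw [margin_risk_param]
      obtain ⟨huL, huR⟩ := hu_bounds w b hw hb
      set u := g ⟪w, x⟫ + b with hu
      have hφRnn := phi_nonneg ρ (g t + G)
      have hφLnn := phi_nonneg ρ (G - g (-t))
      have hφR1 := phi_le_one ρ (g t + G)
      have hφL1 := phi_le_one ρ (G - g (-t))
      rcases le_or_gt 0 u with hu0 | hu0
      · have h1 : φR ≤ phiRho ρ u := phi_anti hρ huR
        have h2 : phiRho ρ (-u) = 1 := phi_of_nonpos hρ (by linarith)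
        have h3 : phiRho ρ (-(g t + G)) = 1 := phi_of_nonpos hρ (by linarith)
        rw [h2, h3]
        have : η * φR ≤ η * phiRho ρ u :=
          mul_le_mul_of_nonneg_left h1 (by rw [hηdef]; linarith)
        linarith
      · have h1 : phiRho ρ u = 1 := phi_of_nonpos hρ hu0.le
        have h2 : φL ≤ phiRho ρ (-u) := by
          apply phi_anti hρ
          linarith
        have h3 : phiRho ρ (-(g t + G)) = 1 := phi_of_nonpos hρ (by linarith)
        rw [h1, h3]
        have hφu : phiRho ρ (-u) ≤ 1 := phi_le_one ρ (-u)
        -- risk = η + (1-η) φ(-u) ≥ η + (1-η) φL ≥ η φR + (1-η) : amounts to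
        -- η(1-φR) - (1-η)(1-φL) ≥ β/2 - 2τ ≥ β/4 > 0
        have key : η * (1 - φR) - (1 - η) * (1 - φL) ≥ (φL - φR) / 4 := by
          rw [hηdef]
          nlinarith [mul_nonneg hτpos.le hφRnn, mul_nonneg hτpos.le hφLnn]
        have : (1 - η) * φL ≤ (1 - η) * phiRho ρ (-u) :=
          mul_le_mul_of_nonneg_left h2 (by rw [hηdef]; linarith)
        nlinarith
    -- the near-optimal predictor f₀ with u = R
    have hf0mem : (fun z => g ⟪E, z⟫ + G) ∈ Hg d g G :=
      mem_Hg hEnorm (by rw [abs_of_nonneg hG])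
    have hrisk0 : innerRisk (marginLoss (phiRho ρ)) (fun z => g ⟪E, z⟫ + G) x η
        = η * φR + (1 - η) * phiRho ρ (-(g t + G)) := by
      rw [margin_risk]
      simp only [hEx]
      rfl
    have hnear : innerRisk (marginLoss (phiRho ρ)) (fun z => g ⟪E, z⟫ + G) x η
        < minInnerRisk (marginLoss (phiRho ρ)) (Hg d g G) x η + δ := by
      rw [hrisk0]
      linarith
    have hadv := hcalδ _ hf0mem hnear
    have hadv0 : innerRisk (advLoss γ) (fun z => g ⟪E, z⟫ + G) x η = 1 - η := by
      rw [adv_risk hγ0 g hgmono E hEnorm G x, hEx]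
      have h1 : ¬ (g (t - γ) + G ≤ 0) := by
        have := hgt_gt (t - γ) (by linarith)
        push_neg
        linarith
      have h2 : 0 ≤ g (t + γ) + G := by
        have := hgt_gt (t + γ) (by linarith)
        linarith
      rw [if_neg h1, if_pos h2]
      ring
    have hminadv : minInnerRisk (advLoss γ) (Hg d g G) x η ≤ η :=
      minAdv_le_eta hd hγ0 hgmono hG hg1 hx1 hη01
    rw [hadv0] at hadv
    -- 1 - η < η + τ, i.e. 2τ < τ
    linarith [hadv, hminadv, hηdef.le, hηdef.ge, hτpos]
  -- Part (iiA)
  have hiiA : phiRho ρ (G - g (-t)) < phiRho ρ (Abar g γ t) := by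
    by_contra hc
    push_neg at hc
    obtain ⟨δ, hδpos, hcalδ⟩ := hcal (1/2) (by norm_num) 1 ⟨zero_le_one, le_refl 1⟩ x hx1
    obtain ⟨hub, s0, hs0, habar⟩ := abar_spec hgcont γ ht0
    have hs0' : |s0| ≤ t := abs_le.2 hs0
    obtain ⟨w0, hw0, hw0x⟩ := exists_unit_inner' hne ht0 hs0'
    have hw0x' : ⟪w0, x⟫ = s0 := by rw [hxdef, hE]; exact hw0x
    have hs01 : -1 ≤ s0 ∧ s0 ≤ 1 := ⟨by cases hs0; linarith, by cases hs0; linarith⟩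
    set b0 := -g (s0 - γ) with hb0
    have hb0G : |b0| ≤ G := by
      rw [hb0, abs_le]
      have h1 := hgt_lt (s0 - γ) (by linarith [hs01.2])
      have h2 := hgt_gt (s0 - γ) (by linarith [hs01.1])
      constructor <;> linarith
    have hf1mem : (fun z => g ⟪w0, z⟫ + b0) ∈ Hg d g G := mem_Hg hw0 hb0G
    -- at η = 1 the minimal margin risk is at least φ(R)
    have hmlow : phiRho ρ (g t + G) ≤
        minInnerRisk (marginLoss (phiRho ρ)) (Hg d g G) x 1 := by
      apply le_minInner (Hg_nonempty hd g hG)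
      rintro f ⟨w, b, hw, hb, rfl⟩
      rw [margin_risk_param]
      obtain ⟨huL, huR⟩ := hu_bounds w b hw hb
      have h1 : phiRho ρ (g t + G) ≤ phiRho ρ (g ⟪w, x⟫ + b) := phi_anti hρ huR
      linarith
    have hrisk1 : innerRisk (marginLoss (phiRho ρ)) (fun z => g ⟪w0, z⟫ + b0) x 1
        = phiRho ρ (Abar g γ t) := by
      rw [margin_risk]
      simp only [hw0x']
      rw [habar, hb0]
      ring_nf
    have hnear : innerRisk (marginLoss (phiRho ρ)) (fun z => g ⟪w0, z⟫ + b0) x 1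
        < minInnerRisk (marginLoss (phiRho ρ)) (Hg d g G) x 1 + δ := by
      rw [hrisk1]
      calc phiRho ρ (Abar g γ t) ≤ phiRho ρ (G - g (-t)) := hc
        _ = phiRho ρ (g t + G) := hi
        _ ≤ minInnerRisk (marginLoss (phiRho ρ)) (Hg d g G) x 1 := hmlow
        _ < _ + δ := by linarith
    have hadv := hcalδ _ hf1mem hnear
    have hadv1 : innerRisk (advLoss γ) (fun z => g ⟪w0, z⟫ + b0) x 1 = 1 := by
      rw [adv_risk hγ0 g hgmono w0 hw0 b0 x, hw0x']
      have h1 : g (s0 - γ) + b0 ≤ 0 := by rw [hb0]; linarith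
      rw [if_pos h1]
      ring
    have hminadv : minInnerRisk (advLoss γ) (Hg d g G) x 1 ≤ 1 - 1 :=
      minAdv_le_one_sub hd hγ0 hgmono hG hg2 hx1 ⟨zero_le_one, le_refl 1⟩
    rw [hadv1] at hadv
    norm_num at hminadv
    linarith
  -- Part (iiB)
  have hiiB : phiRho ρ (G - g (-t)) < phiRho ρ (-(Alow g γ t)) := by
    by_contra hc
    push_neg at hc
    obtain ⟨δ, hδpos, hcalδ⟩ := hcal (1/2) (by norm_num) 0 ⟨le_refl 0, zero_le_one⟩ x hx1
    obtain ⟨hlb, s0, hs0, halow⟩ := alow_spec hgcont γ ht0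
    have hs0' : |s0| ≤ t := abs_le.2 hs0
    obtain ⟨w0, hw0, hw0x⟩ := exists_unit_inner' hne ht0 hs0'
    have hw0x' : ⟪w0, x⟫ = s0 := by rw [hxdef, hE]; exact hw0x
    have hs01 : -1 ≤ s0 ∧ s0 ≤ 1 := ⟨by cases hs0; linarith, by cases hs0; linarith⟩
    set b0 := -g (s0 + γ) with hb0
    have hb0G : |b0| ≤ G := by
      rw [hb0, abs_le]
      have h1 := hgt_lt (s0 + γ) (by linarith [hs01.2])
      have h2 := hgt_gt (s0 + γ) (by linarith [hs01.1])
      constructor <;> linarith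
    have hf1mem : (fun z => g ⟪w0, z⟫ + b0) ∈ Hg d g G := mem_Hg hw0 hb0G
    -- at η = 0 the minimal margin risk is at least φ(G - g(-t))
    have hmlow : phiRho ρ (G - g (-t)) ≤
        minInnerRisk (marginLoss (phiRho ρ)) (Hg d g G) x 0 := by
      apply le_minInner (Hg_nonempty hd g hG)
      rintro f ⟨w, b, hw, hb, rfl⟩
      rw [margin_risk_param]
      obtain ⟨huL, huR⟩ := hu_bounds w b hw hb
      have h1 : phiRho ρ (G - g (-t)) ≤ phiRho ρ (-(g ⟪w, x⟫ + b)) :=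
        phi_anti hρ (by linarith)
      linarith
    have hrisk1 : innerRisk (marginLoss (phiRho ρ)) (fun z => g ⟪w0, z⟫ + b0) x 0
        = phiRho ρ (-(Alow g γ t)) := by
      rw [margin_risk]
      simp only [hw0x']
      rw [halow, hb0]
      ring_nf
    have hnear : innerRisk (marginLoss (phiRho ρ)) (fun z => g ⟪w0, z⟫ + b0) x 0
        < minInnerRisk (marginLoss (phiRho ρ)) (Hg d g G) x 0 + δ := by
      rw [hrisk1]
      calc phiRho ρ (-(Alow g γ t)) ≤ phiRho ρ (G - g (-t)) := hc
        _ ≤ minInnerRisk (marginLoss (phiRho ρ)) (Hg d g G) x 0 := hmlow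
        _ < _ + δ := by linarith
    have hadv := hcalδ _ hf1mem hnear
    have hadv1 : innerRisk (advLoss γ) (fun z => g ⟪w0, z⟫ + b0) x 0 = 1 := by
      rw [adv_risk hγ0 g hgmono w0 hw0 b0 x, hw0x']
      have h2 : 0 ≤ g (s0 + γ) + b0 := by rw [hb0]; linarith
      rw [if_pos h2]
      ring
    have hminadv : minInnerRisk (advLoss γ) (Hg d g G) x 0 ≤ 0 :=
      minAdv_le_eta hd hγ0 hgmono hG hg1 hx1 ⟨le_refl 0, zero_le_one⟩
    rw [hadv1] at hadv
    linarith
  exact ⟨hi, lt_min hiiA hiiB⟩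

end MainNec
section MainSuf
set_option maxHeartbeats 2000000

variable {d : ℕ}

lemma sufficiency (hd : 2 ≤ d) {γ : ℝ} (hγ0 : 0 < γ) (hγ1 : γ < 1)
    {ρ : ℝ} (hρ : 0 < ρ) {g : ℝ → ℝ} (hgmono : Monotone g) (hgcont : Continuous g)
    {G : ℝ} (hG : 0 ≤ G) (hg1 : g (1 + γ) < G) (hg2 : -G < g (-1 - γ))
    (hgsum : ∀ t ∈ Set.Icc (0:ℝ) 1, 0 ≤ g (-t) + g t)
    (hcond : ∀ t ∈ Set.Icc (0:ℝ) 1,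
        phiRho ρ (G - g (-t)) = phiRho ρ (g t + G) ∧
        phiRho ρ (G - g (-t)) <
          min (phiRho ρ (Abar g γ t)) (phiRho ρ (-(Alow g γ t)))) :
    Calibrated (Hg d g G) (marginLoss (phiRho ρ)) (advLoss γ) := by
  intro ε hε η hη x hx
  obtain ⟨hη0, hη1⟩ := hη
  have hr0 : (0:ℝ) ≤ ‖x‖ := norm_nonneg x
  obtain ⟨hc1, hc2⟩ := hcond ‖x‖ ⟨hr0, hx⟩
  rw [lt_min_iff] at hc2
  obtain ⟨hcA, hcB⟩ := hc2
  have hgt_lt : ∀ s : ℝ, s ≤ 1 + γ → g s < G := fun s hs => lt_of_le_of_lt (hgmono hs) hg1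
  have hgt_gt : ∀ s : ℝ, -1 - γ ≤ s → -G < g s := fun s hs => lt_of_lt_of_le hg2 (hgmono hs)
  have hRpos : 0 < g ‖x‖ + G := by have := hgt_gt ‖x‖ (by linarith); linarith
  have hLpos : 0 < G - g (-‖x‖) := by have := hgt_lt (-‖x‖) (by linarith); linarith
  have hLR : G - g (-‖x‖) ≤ g ‖x‖ + G := by have := hgsum ‖x‖ ⟨hr0, hx⟩; linarith
  have habr := abar_spec hgcont γ hr0
  have halr := alow_spec hgcont γ hr0
  have hab0 : 0 ≤ Abar g γ ‖x‖ := abar_nonneg hgmono hgcont hγ0.le hr0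
  have hal0 : 0 ≤ -Alow g γ ‖x‖ := by
    have := alow_nonpos hgmono hgcont hγ0.le hr0
    linarith
  -- strict inequalities derived from the condition
  have hA_lt_L : Abar g γ ‖x‖ < G - g (-‖x‖) := phi_lt_of_lt hρ hcA
  have hA_lt_rho : Abar g γ ‖x‖ < ρ :=
    phi_lt_rho hρ (lt_of_le_of_lt (phi_nonneg ρ _) hcA)
  have hB_lt_L : -Alow g γ ‖x‖ < G - g (-‖x‖) := phi_lt_of_lt hρ hcB
  have hB_lt_rho : -Alow g γ ‖x‖ < ρ :=
    phi_lt_rho hρ (lt_of_le_of_lt (phi_nonneg ρ _) hcB)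
  have hφL1 : phiRho ρ (G - g (-‖x‖)) < 1 := phi_lt_one hρ hLpos
  have hφLnn : 0 ≤ phiRho ρ (G - g (-‖x‖)) := phi_nonneg ρ _
  -- the two positive quantities A := m₁/ρ and B := m₂/ρ
  set A : ℝ := (min ρ (g ‖x‖ + G) - Abar g γ ‖x‖) / ρ with hAdef
  set B : ℝ := (min ρ (G - g (-‖x‖)) - (-Alow g γ ‖x‖)) / ρ with hBdef
  have hApos : 0 < A := by
    apply div_pos _ hρ
    rcases le_total ρ (g ‖x‖ + G) with h | h
    · rw [min_eq_left h]; linarith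
    · rw [min_eq_right h]; linarith
  have hBpos : 0 < B := by
    apply div_pos _ hρ
    rcases le_total ρ (G - g (-‖x‖)) with h | h
    · rw [min_eq_left h]; linarith
    · rw [min_eq_right h]; linarith
  -- key phi identities
  have hphiA : phiRho ρ (Abar g γ ‖x‖) = phiRho ρ (g ‖x‖ + G) + A := by
    have h1 : phiRho ρ (Abar g γ ‖x‖) - phiRho ρ (min ρ (g ‖x‖ + G)) = A := by
      rw [hAdef]
      apply phi_sub hρ hab0
      · rcases le_total ρ (g ‖x‖ + G) with h | h
        · rw [min_eq_left h]; linarith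
        · rw [min_eq_right h]; linarith
      · exact min_le_left _ _
    have h2 : phiRho ρ (g ‖x‖ + G) = phiRho ρ (min ρ (g ‖x‖ + G)) := phi_min hρ
    linarith
  have hphiB : phiRho ρ (-Alow g γ ‖x‖) = phiRho ρ (G - g (-‖x‖)) + B := by
    have h1 : phiRho ρ (-Alow g γ ‖x‖) - phiRho ρ (min ρ (G - g (-‖x‖))) = B := by
      rw [hBdef]
      apply phi_sub hρ hal0
      · rcases le_total ρ (G - g (-‖x‖)) with h | h
        · rw [min_eq_left h]; linarith
        · rw [min_eq_right h]; linarith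
      · exact min_le_left _ _
    have h2 : phiRho ρ (G - g (-‖x‖)) = phiRho ρ (min ρ (G - g (-‖x‖))) := phi_min hρ
    linarith
  -- bounds on u for members
  have hu_bounds : ∀ (w : EuclideanSpace ℝ (Fin d)) (b : ℝ), ‖w‖ = 1 → |b| ≤ G →
      g (-‖x‖) - G ≤ g ⟪w, x⟫ + b ∧ g ⟪w, x⟫ + b ≤ g ‖x‖ + G := by
    intro w b hw hb
    have hs : |⟪w, x⟫| ≤ ‖x‖ := inner_abs_le hw
    rw [abs_le] at hs hb
    constructor
    · have := hgmono hs.1; linarith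
    · have := hgmono hs.2; linarith
  have hs_mem : ∀ w : EuclideanSpace ℝ (Fin d), ‖w‖ = 1 →
      ⟪w, x⟫ ∈ Set.Icc (-‖x‖) ‖x‖ := by
    intro w hw
    have hs : |⟪w, x⟫| ≤ ‖x‖ := inner_abs_le hw
    exact abs_le.1 hs
  -- upper bound on min margin risk via u = R, simplified
  have hminR : minInnerRisk (marginLoss (phiRho ρ)) (Hg d g G) x η ≤
      η * phiRho ρ (g ‖x‖ + G) + (1 - η) := by
    have h := minMargin_le_R (g := g) hd ρ hG x ⟨hη0, hη1⟩
    have h2 : phiRho ρ (-(g ‖x‖ + G)) = 1 := phi_of_nonpos hρ (by linarith)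
    rw [h2] at h
    linarith
  -- upper bound on min margin risk via u = L, simplified
  have hminL : minInnerRisk (marginLoss (phiRho ρ)) (Hg d g G) x η ≤
      η + (1 - η) * phiRho ρ (G - g (-‖x‖)) := by
    have h := minMargin_le_L (g := g) hd ρ hG x ⟨hη0, hη1⟩
    have h2 : phiRho ρ (g (-‖x‖) - G) = 1 := phi_of_nonpos hρ (by linarith)
    have h3 : -(g (-‖x‖) - G) = G - g (-‖x‖) := by ring
    rw [h2, h3] at h
    linarith
  have hminadv := minAdv_ge hd hγ0 hgmono hG x ⟨hη0, hη1⟩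
  -- case split on η
  rcases lt_trichotomy η (1/2) with hηlt | hηeq | hηgt
  · -- η < 1/2 : near-minimizers must have the (-1)-indicator equal to 0
    refine ⟨min (B / 2) ((1 - 2*η) * (1 - phiRho ρ (G - g (-‖x‖)))), ?_, ?_⟩
    · apply lt_min (by linarith)
      have h0 : 0 < 1 - 2*η := by linarith
      exact mul_pos h0 (by linarith)
    rintro f ⟨w, b, hw, hb, rfl⟩ hnear
    rw [margin_risk_param] at hnear
    obtain ⟨huL, huR⟩ := hu_bounds w b hw hb
    have hδ1 : min (B / 2) ((1 - 2*η) * (1 - phiRho ρ (G - g (-‖x‖)))) ≤ B / 2 :=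
      min_le_left _ _
    have hδ2 : min (B / 2) ((1 - 2*η) * (1 - phiRho ρ (G - g (-‖x‖)))) ≤
        (1 - 2*η) * (1 - phiRho ρ (G - g (-‖x‖))) := min_le_right _ _
    have hclaim : ¬ (0 ≤ g (⟪w, x⟫ + γ) + b) := by
      intro hcon
      have hual : Alow g γ ‖x‖ ≤ g ⟪w, x⟫ + b := by
        have := halr.1 ⟪w, x⟫ (hs_mem w hw)
        linarith
      rcases le_or_gt (g ⟪w, x⟫ + b) 0 with hu0 | hu0
      · -- u ≤ 0
        have h1 : phiRho ρ (g ⟪w, x⟫ + b) = 1 := phi_of_nonpos hρ hu0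
        have h2 : phiRho ρ (-Alow g γ ‖x‖) ≤ phiRho ρ (-(g ⟪w, x⟫ + b)) :=
          phi_anti hρ (by linarith)
        have h3 : (1 - η) * phiRho ρ (-Alow g γ ‖x‖) ≤
            (1 - η) * phiRho ρ (-(g ⟪w, x⟫ + b)) :=
          mul_le_mul_of_nonneg_left h2 (by linarith)
        rw [hphiB] at h3
        have hhalf : B / 2 ≤ (1 - η) * B := by nlinarith
        rw [h1] at hnear
        nlinarith [hminL]
      · -- u > 0
        have h1 : phiRho ρ (-(g ⟪w, x⟫ + b)) = 1 := phi_of_nonpos hρ (by linarith)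
        have h2 : phiRho ρ (g ‖x‖ + G) ≤ phiRho ρ (g ⟪w, x⟫ + b) := phi_anti hρ huR
        have h3 : η * phiRho ρ (g ‖x‖ + G) ≤ η * phiRho ρ (g ⟪w, x⟫ + b) :=
          mul_le_mul_of_nonneg_left h2 hη0
        rw [← hc1] at h3
        rw [h1] at hnear
        nlinarith [hminL]
    -- conclude: adversarial risk is at most η
    rw [adv_risk hγ0 g hgmono w hw b x, if_neg hclaim]
    have hmineq : min η (1 - η) = η := min_eq_left (by linarith)
    rw [hmineq] at hminadv
    have : η * (if g (⟪w, x⟫ - γ) + b ≤ 0 then (1:ℝ) else 0) ≤ η := by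
      split <;> simp <;> linarith
    linarith
  · -- η = 1/2
    subst hηeq
    refine ⟨min (A / 2) (B / 2), lt_min (by linarith) (by linarith), ?_⟩
    rintro f ⟨w, b, hw, hb, rfl⟩ hnear
    rw [margin_risk_param] at hnear
    obtain ⟨huL, huR⟩ := hu_bounds w b hw hb
    have hδ1 : min (A / 2) (B / 2) ≤ A / 2 := min_le_left _ _
    have hδ2 : min (A / 2) (B / 2) ≤ B / 2 := min_le_right _ _
    have hclaim : ¬ (g (⟪w, x⟫ - γ) + b ≤ 0) ∨ ¬ (0 ≤ g (⟪w, x⟫ + γ) + b) := by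
      by_contra hcon
      push_neg at hcon
      obtain ⟨ha, hc⟩ := hcon
      have huab : g ⟪w, x⟫ + b ≤ Abar g γ ‖x‖ := by
        have := habr.1 ⟪w, x⟫ (hs_mem w hw)
        linarith
      have hual : Alow g γ ‖x‖ ≤ g ⟪w, x⟫ + b := by
        have := halr.1 ⟪w, x⟫ (hs_mem w hw)
        linarith
      rcases le_or_gt 0 (g ⟪w, x⟫ + b) with hu0 | hu0
      · have h1 : phiRho ρ (-(g ⟪w, x⟫ + b)) = 1 := phi_of_nonpos hρ (by linarith)
        have h2 : phiRho ρ (Abar g γ ‖x‖) ≤ phiRho ρ (g ⟪w, x⟫ + b) := phi_anti hρ huab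
        rw [hphiA] at h2
        rw [h1] at hnear
        nlinarith [hminR]
      · have h1 : phiRho ρ (g ⟪w, x⟫ + b) = 1 := phi_of_nonpos hρ hu0.le
        have h2 : phiRho ρ (-Alow g γ ‖x‖) ≤ phiRho ρ (-(g ⟪w, x⟫ + b)) :=
          phi_anti hρ (by linarith)
        rw [hphiB] at h2
        rw [h1] at hnear
        nlinarith [hminR, hc1]
    have hmineq : min (1/2 : ℝ) (1 - 1/2) = 1 - (1/2 : ℝ) := by norm_num
    rw [adv_risk hγ0 g hgmono w hw b x]
    rcases hclaim with hcl | hcl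
    · rw [if_neg hcl]
      have : (1 - 1/2 : ℝ) * (if 0 ≤ g (⟪w, x⟫ + γ) + b then (1:ℝ) else 0) ≤ 1/2 := by
        split <;> norm_num
      rw [hmineq] at hminadv
      norm_num at hminadv this ⊢
      linarith
    · rw [if_neg hcl]
      have : (1/2 : ℝ) * (if g (⟪w, x⟫ - γ) + b ≤ 0 then (1:ℝ) else 0) ≤ 1/2 := by
        split <;> norm_num
      rw [hmineq] at hminadv
      norm_num at hminadv this ⊢
      linarith
  · -- η > 1/2 : near-minimizers must have the (+1)-indicator equal to 0
    refine ⟨min (A / 2) ((2*η - 1) * (1 - phiRho ρ (G - g (-‖x‖)))), ?_, ?_⟩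
    · apply lt_min (by linarith)
      have h0 : 0 < 2*η - 1 := by linarith
      exact mul_pos h0 (by linarith)
    rintro f ⟨w, b, hw, hb, rfl⟩ hnear
    rw [margin_risk_param] at hnear
    obtain ⟨huL, huR⟩ := hu_bounds w b hw hb
    have hδ1 : min (A / 2) ((2*η - 1) * (1 - phiRho ρ (G - g (-‖x‖)))) ≤ A / 2 :=
      min_le_left _ _
    have hδ2 : min (A / 2) ((2*η - 1) * (1 - phiRho ρ (G - g (-‖x‖)))) ≤
        (2*η - 1) * (1 - phiRho ρ (G - g (-‖x‖))) := min_le_right _ _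
    have hclaim : ¬ (g (⟪w, x⟫ - γ) + b ≤ 0) := by
      intro hcon
      have huab : g ⟪w, x⟫ + b ≤ Abar g γ ‖x‖ := by
        have := habr.1 ⟪w, x⟫ (hs_mem w hw)
        linarith
      rcases le_or_gt 0 (g ⟪w, x⟫ + b) with hu0 | hu0
      · have h1 : phiRho ρ (-(g ⟪w, x⟫ + b)) = 1 := phi_of_nonpos hρ (by linarith)
        have h2 : phiRho ρ (Abar g γ ‖x‖) ≤ phiRho ρ (g ⟪w, x⟫ + b) := phi_anti hρ huab
        rw [hphiA] at h2
        have h3 : η * (phiRho ρ (g ‖x‖ + G) + A) ≤ η * phiRho ρ (g ⟪w, x⟫ + b) :=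
          mul_le_mul_of_nonneg_left h2 hη0
        have hhalf : A / 2 ≤ η * A := by nlinarith
        rw [h1] at hnear
        nlinarith [hminR]
      · have h1 : phiRho ρ (g ⟪w, x⟫ + b) = 1 := phi_of_nonpos hρ hu0.le
        have h2 : phiRho ρ (G - g (-‖x‖)) ≤ phiRho ρ (-(g ⟪w, x⟫ + b)) :=
          phi_anti hρ (by linarith)
        have h3 : (1 - η) * phiRho ρ (G - g (-‖x‖)) ≤
            (1 - η) * phiRho ρ (-(g ⟪w, x⟫ + b)) :=
          mul_le_mul_of_nonneg_left h2 (by linarith)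
        rw [h1] at hnear
        nlinarith [hminR, hc1]
    rw [adv_risk hγ0 g hgmono w hw b x, if_neg hclaim]
    have hmineq : min η (1 - η) = 1 - η := min_eq_right (by linarith)
    rw [hmineq] at hminadv
    have : (1 - η) * (if 0 ≤ g (⟪w, x⟫ + γ) + b then (1:ℝ) else 0) ≤ 1 - η := by
      split <;> simp <;> linarith
    linarith

end MainSuf

theorem stmt13 (d : ℕ) (hd : 2 ≤ d) (γ : ℝ) (hγ0 : 0 < γ) (hγ1 : γ < 1)
    (ρ : ℝ) (hρ : 0 < ρ)
    (g : ℝ → ℝ) (hgmono : Monotone g) (hgcont : Continuous g)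
    (G : ℝ) (hG : 0 ≤ G) (hg1 : g (1 + γ) < G) (hg2 : -G < g (-1 - γ))
    (hgsum : ∀ t ∈ Set.Icc (0:ℝ) 1, 0 ≤ g (-t) + g t) :
    Calibrated (Hg d g G) (marginLoss (phiRho ρ)) (advLoss γ) ↔
      ∀ t ∈ Set.Icc (0:ℝ) 1,
        phiRho ρ (G - g (-t)) = phiRho ρ (g t + G) ∧
        phiRho ρ (G - g (-t)) <
          min (phiRho ρ (Abar g γ t)) (phiRho ρ (-(Alow g γ t))) := by
  constructor
  · intro hcal t ht
    exact necessity hd hγ0 hγ1 hρ hgmono hgcont hG hg1 hg2 hgsum hcal ht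
  · intro hcond
    exact sufficiency hd hγ0 hγ1 hρ hgmono hgcont hG hg1 hg2 hgsum hcond

end
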